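/- Let G be a prime 3^{+1}-rank-connected graph with a triplet {a,b,c}. Let (X,Y) be a partition of V(G)−{a} with ρ_{G∖a}(X) = 2 and |X|, |Y| ≥ 5. Then exactly one of b, c lies in X, and moreover ρ_G(X−{b,c}, Y∪{a}) = ρ_G(X∪{a}, Y−{b,c}) = 3. -/

import Mathlib

open Finset

variable {V : Type} [Fintype V] [DecidableEq V]

open scoped Classical

/-- The rank over GF(2) of the `X × Y` submatrix of the adjacency matrix of `G`. -/
noncomputable def cutRankOn (G : SimpleGraph V) (X Y : Finset V) : ℕ :=
  (Matrix.of (fun (i : ↥X) (j : ↥Y) => if G.Adj i.1 j.1 then (1 : ZMod 2) else 0)).rank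

/-- The cut-rank of `X` in the graph `G` restricted to the vertex set `S`:
the rank over GF(2) of the `X × (S \ X)` submatrix of the adjacency matrix. -/
noncomputable def cutRank (G : SimpleGraph V) (S X : Finset V) : ℕ :=
  cutRankOn G X (S \ X)

/-- `A` gives a split of the graph `G` restricted to the vertex set `S`. -/
def IsSplit (G : SimpleGraph V) (S A : Finset V) : Prop :=
  A ⊆ S ∧ cutRank G S A ≤ 1 ∧ 2 ≤ A.card ∧ 2 ≤ (S \ A).card

/-- The graph `G` restricted to the vertex set `S` is prime: connected and with no split. -/
def IsPrime (G : SimpleGraph V) (S : Finset V) : Prop :=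
  (G.induce (↑S : Set V)).Connected ∧ ∀ A, ¬ IsSplit G S A

/-- `G` restricted to `S` is `k⁺ˡ`-rank-connected. -/
def RankConn (G : SimpleGraph V) (S : Finset V) (k l : ℤ) : Prop :=
  ∀ X ⊆ S, (cutRank G S X : ℤ) < k →
    min (X.card : ℤ) (((S \ X).card : ℤ)) < k + l

/-- `G` restricted to `S` is `k`-rank-connected. -/
def RankConnAll (G : SimpleGraph V) (S : Finset V) (k : ℤ) : Prop :=
  ∀ m : ℤ, m ≤ k → RankConn G S m 0

def SideA (G : SimpleGraph V) (v w x : V) : Prop := G.Adj v x ∧ ¬ G.Adj w x ∧ x ≠ w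
def SideB (G : SimpleGraph V) (v w x : V) : Prop := G.Adj w x ∧ ¬ G.Adj v x ∧ x ≠ v
def SideC (G : SimpleGraph V) (v w x : V) : Prop := G.Adj v x ∧ G.Adj w x

/-- `x` and `y` lie in different ones among the three sets
`N(v)−N(w)−{w}`, `N(w)−N(v)−{v}`, `N(v)∩N(w)`. -/
def PivotToggle (G : SimpleGraph V) (v w x y : V) : Prop :=
  (SideA G v w x ∧ SideB G v w y) ∨ (SideB G v w x ∧ SideA G v w y) ∨
  (SideA G v w x ∧ SideC G v w y) ∨ (SideC G v w x ∧ SideA G v w y) ∨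
  (SideB G v w x ∧ SideC G v w y) ∨ (SideC G v w x ∧ SideB G v w y)

set_option linter.unusedSectionVars false in
lemma pivotToggle_symm {G : SimpleGraph V} {v w x y : V}
    (h : PivotToggle G v w x y) : PivotToggle G v w y x := by
  unfold PivotToggle at h ⊢; tauto

/-- The graph `G ∧ vw` obtained by pivoting the edge `vw`: toggle adjacency across the
three sets and swap the labels of `v` and `w`. -/
def pivot (G : SimpleGraph V) (v w : V) : SimpleGraph V where
  Adj a b := a ≠ b ∧
    Xor' (G.Adj (Equiv.swap v w a) (Equiv.swap v w b))
         (PivotToggle G v w (Equiv.swap v w a) (Equiv.swap v w b))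
  symm := by
    constructor
    intro a b h
    obtain ⟨hne, hx⟩ := h
    refine ⟨hne.symm, ?_⟩
    have hA : G.Adj (Equiv.swap v w b) (Equiv.swap v w a) ↔
        G.Adj (Equiv.swap v w a) (Equiv.swap v w b) := SimpleGraph.adj_comm _ _ _
    have hT : PivotToggle G v w (Equiv.swap v w b) (Equiv.swap v w a) ↔
        PivotToggle G v w (Equiv.swap v w a) (Equiv.swap v w b) :=
      ⟨pivotToggle_symm, pivotToggle_symm⟩
    rw [hA, hT]
    exact hx
  loopless := by constructor; intro a h; exact h.1 rfl

/-- One pivot step along an edge. -/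
def PivotStep (G H : SimpleGraph V) : Prop := ∃ v w, G.Adj v w ∧ H = pivot G v w

/-- Pivot-equivalence: a sequence of pivots. -/
def PivotEquiv : SimpleGraph V → SimpleGraph V → Prop := Relation.ReflTransGen PivotStep

/-- `A` is a fully closed set of `G` restricted to `S`. -/
def FullyClosed (G : SimpleGraph V) (S A : Finset V) : Prop :=
  A ⊆ S ∧ cutRank G S A = 2 ∧ 2 < A.card ∧
    ∀ u ∈ S, u ∉ A → cutRank G S A < cutRank G S (insert u A)

/-- `{a,b,c}` is a triplet of `G` (on vertex set `univ`). -/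
def Triplet (G : SimpleGraph V) (a b c : V) : Prop :=
  cutRank G Finset.univ {a, b, c} = 2 ∧
  ∀ x ∈ ({a, b, c} : Finset V),
    cutRank G (Finset.univ \ {x}) (({a, b, c} : Finset V) \ {x}) = 2

/-- `B` is a `k`-branched set of `G` restricted to `S`. -/
inductive KBranched (G : SimpleGraph V) (S : Finset V) (k : ℕ) : Finset V → Prop
  | single (v : V) (hv : v ∈ S) (h : cutRank G S {v} ≤ k) : KBranched G S k {v}
  | split (B B' : Finset V) (hB : B ⊆ S) (h : cutRank G S B ≤ k)
      (h1 : B' ⊆ B) (h2 : B'.Nonempty) (h3 : B' ≠ B)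
      (hb1 : KBranched G S k B') (hb2 : KBranched G S k (B \ B')) : KBranched G S k B

/-- The rank-width of `G` restricted to `S`: the least `k` such that `S` is `k`-branched
(equivalently, the minimum width of a rank-decomposition). -/
noncomputable def rankWidth (G : SimpleGraph V) (S : Finset V) : ℕ :=
  sInf {k | S = ∅ ∨ KBranched G S k S}

/-- `A` is a titanic set of `G` restricted to `S`. -/
def Titanic (G : SimpleGraph V) (S A : Finset V) : Prop :=
  ∀ A1 A2 A3 : Finset V, A1 ∪ A2 ∪ A3 = A →
    Disjoint A1 A2 → Disjoint A1 A3 → Disjoint A2 A3 →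
    cutRank G S A ≤ cutRank G S A1 ∨ cutRank G S A ≤ cutRank G S A2 ∨
      cutRank G S A ≤ cutRank G S A3

noncomputable def colfun (G : SimpleGraph V) (X : Finset V) (u : V) : ↥X → ZMod 2 :=
  fun i => if G.Adj i.1 u then 1 else 0

open Submodule Module

set_option linter.unusedSectionVars false

lemma cutRankOn_eq_finrank (G : SimpleGraph V) (X Y : Finset V) :
    cutRankOn G X Y =
      finrank (ZMod 2) (span (ZMod 2) (colfun G X '' (Y : Set V))) := by
  have hs : Set.range (Matrix.of fun (i : ↥X) (j : ↥Y) =>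
      if G.Adj i.1 j.1 then (1 : ZMod 2) else 0).transpose = colfun G X '' (Y : Set V) := by
    rw [show (Matrix.of fun (i : ↥X) (j : ↥Y) =>
        if G.Adj i.1 j.1 then (1 : ZMod 2) else 0).transpose
      = colfun G X ∘ Subtype.val from rfl, Set.range_comp, Subtype.range_coe]
  rw [cutRankOn, Matrix.rank_eq_finrank_span_cols, ← hs]; rfl

lemma cutRankOn_comm (G : SimpleGraph V) (X Y : Finset V) :
    cutRankOn G X Y = cutRankOn G Y X := by
  rw [cutRankOn, cutRankOn, ← Matrix.rank_transpose
    (Matrix.of (fun (i : ↥Y) (j : ↥X) => if G.Adj i.1 j.1 then (1 : ZMod 2) else 0))]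
  congr 1
  ext i j
  simp only [Matrix.transpose_apply, Matrix.of_apply]
  exact if_congr (G.adj_comm _ _) rfl rfl

lemma finrank_span_single_le {M : Type} [AddCommGroup M] [Module (ZMod 2) M] (x : M) :
    finrank (ZMod 2) (span (ZMod 2) ({x} : Set M)) ≤ 1 := by
  by_cases h : x = 0
  · subst h
    rw [Submodule.span_zero_singleton]
    simp
  · exact le_of_eq (finrank_span_singleton h)

lemma cutRankOn_mono_right (G : SimpleGraph V) {X Y₁ Y₂ : Finset V} (h : Y₁ ⊆ Y₂) :
    cutRankOn G X Y₁ ≤ cutRankOn G X Y₂ := by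
  rw [cutRankOn_eq_finrank, cutRankOn_eq_finrank]
  exact Submodule.finrank_mono (span_mono (Set.image_mono (by exact_mod_cast h)))

lemma cutRankOn_mono_left (G : SimpleGraph V) {X₁ X₂ Y : Finset V} (h : X₁ ⊆ X₂) :
    cutRankOn G X₁ Y ≤ cutRankOn G X₂ Y := by
  rw [cutRankOn_comm G X₁ Y, cutRankOn_comm G X₂ Y]
  exact cutRankOn_mono_right G h

lemma cutRankOn_insert_right_le (G : SimpleGraph V) (X Y : Finset V) (u : V) :
    cutRankOn G X (insert u Y) ≤ cutRankOn G X Y + 1 := by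
  rw [cutRankOn_eq_finrank, cutRankOn_eq_finrank, Finset.coe_insert, Set.image_insert_eq,
    Submodule.span_insert]
  refine le_trans (Submodule.finrank_add_le_finrank_add_finrank _ _) ?_
  rw [add_comm]
  exact Nat.add_le_add_left (finrank_span_single_le _) _

lemma cutRankOn_insert_right_eq (G : SimpleGraph V) {X Y : Finset V} {u : V}
    (h : colfun G X u ∈ span (ZMod 2) (colfun G X '' (Y : Set V))) :
    cutRankOn G X (insert u Y) = cutRankOn G X Y := by
  rw [cutRankOn_eq_finrank, cutRankOn_eq_finrank, Finset.coe_insert, Set.image_insert_eq,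
    Submodule.span_insert_eq_span h]




lemma zmod2_rearrange : ∀ x y z : ZMod 2, x = y + z → y = z + x := by decide

lemma zmod2_rearrange' : ∀ x y z : ZMod 2, x = y + z → y = x + z := by decide

lemma rankConn_lower {G : SimpleGraph V} (h31 : RankConn G Finset.univ 3 1)
    {Z : Finset V} (h1 : 4 ≤ Z.card) (h2 : 4 ≤ (Finset.univ \ Z).card) :
    3 ≤ cutRank G Finset.univ Z := by
  by_contra h
  push_neg at h
  have hlt : (cutRank G Finset.univ Z : ℤ) < 3 := by exact_mod_cast h
  have := h31 Z (Finset.subset_univ _) hlt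
  have h1' : (4 : ℤ) ≤ (Z.card : ℤ) := by exact_mod_cast h1
  have h2' : (4 : ℤ) ≤ ((Finset.univ \ Z).card : ℤ) := by exact_mod_cast h2
  have := le_min h1' h2'
  omega

lemma triplet_parity {G : SimpleGraph V} {a b c : V}
    (hab : a ≠ b) (hac : a ≠ c) (hbc : b ≠ c) (ht : Triplet G a b c) :
    ∀ u, u ≠ a → u ≠ b → u ≠ c →
      (if G.Adj u a then (1 : ZMod 2) else 0) =
        (if G.Adj u b then 1 else 0) + (if G.Adj u c then 1 else 0) := by
  classical
  set W : Finset V := Finset.univ \ {a, b, c} with hW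
  set wa := colfun G W a with hwa
  set wb := colfun G W b with hwb
  set wc := colfun G W c with hwc
  -- triple rank
  have himg3 : colfun G W '' (({a, b, c} : Finset V) : Set V) = {wa, wb, wc} := by
    simp [Set.image_insert_eq]; rfl
  have h3 : finrank (ZMod 2) (span (ZMod 2) ({wa, wb, wc} : Set (↥W → ZMod 2))) = 2 := by
    have := ht.1
    rw [cutRank, cutRankOn_comm, cutRankOn_eq_finrank, himg3] at this
    exact this
  -- pair ranks
  have hpair : ∀ x y z : V, x ∈ ({a,b,c} : Finset V) →
      ({a,b,c} : Finset V) \ {x} = {y, z} →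
      (Finset.univ \ {x}) \ {y, z} = W →
      finrank (ZMod 2) (span (ZMod 2)
        ({colfun G W y, colfun G W z} : Set (↥W → ZMod 2))) = 2 := by
    intro x y z hx h1 h2
    have := ht.2 x hx
    rw [cutRank, h1, h2, cutRankOn_comm, cutRankOn_eq_finrank] at this
    have himg : colfun G W '' (({y, z} : Finset V) : Set V)
        = {colfun G W y, colfun G W z} := by simp [Set.image_insert_eq]
    rw [himg] at this
    exact this
  have hbc' : ({a,b,c} : Finset V) \ {a} = {b, c} := by
    ext x
    simp only [Finset.mem_sdiff, Finset.mem_insert, Finset.mem_singleton]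
    constructor
    · tauto
    · rintro (rfl | rfl)
      · exact ⟨Or.inr (Or.inl rfl), Ne.symm hab⟩
      · exact ⟨Or.inr (Or.inr rfl), Ne.symm hac⟩
  have hac' : ({a,b,c} : Finset V) \ {b} = {a, c} := by
    ext x
    simp only [Finset.mem_sdiff, Finset.mem_insert, Finset.mem_singleton]
    constructor
    · tauto
    · rintro (rfl | rfl)
      · exact ⟨Or.inl rfl, hab⟩
      · exact ⟨Or.inr (Or.inr rfl), Ne.symm hbc⟩
  have hab' : ({a,b,c} : Finset V) \ {c} = {a, b} := by
    ext x
    simp only [Finset.mem_sdiff, Finset.mem_insert, Finset.mem_singleton]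
    constructor
    · tauto
    · rintro (rfl | rfl)
      · exact ⟨Or.inl rfl, hac⟩
      · exact ⟨Or.inr (Or.inl rfl), hbc⟩
  have hWa : (Finset.univ \ {a}) \ {b, c} = W := by
    ext x; simp only [hW, Finset.mem_sdiff, Finset.mem_univ, Finset.mem_insert,
      Finset.mem_singleton, true_and]; tauto
  have hWb : (Finset.univ \ {b}) \ {a, c} = W := by
    ext x; simp only [hW, Finset.mem_sdiff, Finset.mem_univ, Finset.mem_insert,
      Finset.mem_singleton, true_and]; tauto
  have hWc : (Finset.univ \ {c}) \ {a, b} = W := by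
    ext x; simp only [hW, Finset.mem_sdiff, Finset.mem_univ, Finset.mem_insert,
      Finset.mem_singleton, true_and]; tauto
  have h_bc : finrank (ZMod 2) (span (ZMod 2) ({wb, wc} : Set (↥W → ZMod 2))) = 2 :=
    hpair a b c (by simp) hbc' hWa
  have h_ac : finrank (ZMod 2) (span (ZMod 2) ({wa, wc} : Set (↥W → ZMod 2))) = 2 :=
    hpair b a c (by simp) hac' hWb
  have h_ab : finrank (ZMod 2) (span (ZMod 2) ({wa, wb} : Set (↥W → ZMod 2))) = 2 :=
    hpair c a b (by simp) hab' hWc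
  -- wc ∈ span {wa, wb}
  have hle : span (ZMod 2) ({wa, wb} : Set (↥W → ZMod 2)) ≤
      span (ZMod 2) ({wa, wb, wc} : Set (↥W → ZMod 2)) :=
    span_mono (Set.insert_subset_insert (Set.singleton_subset_iff.2 (Set.mem_insert _ _)))
  have heq : span (ZMod 2) ({wa, wb} : Set (↥W → ZMod 2)) =
      span (ZMod 2) ({wa, wb, wc} : Set (↥W → ZMod 2)) :=
    Submodule.eq_of_le_of_finrank_le hle (by rw [h3, h_ab])
  have hwc_mem : wc ∈ span (ZMod 2) ({wa, wb} : Set (↥W → ZMod 2)) := by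
    rw [heq]; exact subset_span (by simp)
  rw [Submodule.mem_span_pair] at hwc_mem
  obtain ⟨s, t, hst⟩ := hwc_mem
  have hcases : ∀ x : ZMod 2, x = 0 ∨ x = 1 := by decide
  have hkey : wc = wa + wb := by
    rcases hcases s with rfl | rfl <;> rcases hcases t with rfl | rfl <;>
      simp only [zero_smul, one_smul, zero_add, add_zero] at hst
    · -- wc = 0
      exfalso
      rw [← hst] at h_bc
      have : ({wb, (0 : ↥W → ZMod 2)} : Set (↥W → ZMod 2)) = insert 0 {wb} := by
        rw [Set.pair_comm]
      rw [this, Submodule.span_insert_zero] at h_bc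
      have := finrank_span_single_le wb
      omega
    · -- wc = wb
      exfalso
      rw [← hst] at h_bc
      rw [Set.pair_eq_singleton] at h_bc
      have := finrank_span_single_le wb
      omega
    · -- wc = wa
      exfalso
      rw [← hst] at h_ac
      rw [Set.pair_eq_singleton] at h_ac
      have := finrank_span_single_le wa
      omega
    · exact hst.symm
  intro u hua hub huc
  have huW : u ∈ W := by simp [hW, hua, hub, huc]
  have := congrFun hkey ⟨u, huW⟩
  have h' : (if G.Adj u c then (1 : ZMod 2) else 0)
      = (if G.Adj u a then 1 else 0) + (if G.Adj u b then 1 else 0) := by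
    simpa only [hwa, hwb, hwc, colfun, Pi.add_apply] using this
  exact zmod2_rearrange _ _ _ h'

lemma erase_rank {G : SimpleGraph V} {a p q : V} {X Y : Finset V}
    (h31 : RankConn G Finset.univ 3 1)
    (hcompl : Finset.univ \ X = insert a Y)
    (hp : p ∈ X) (hq : q ∈ Y)
    (hpar : ∀ u, u ≠ a → u ≠ p → u ≠ q →
      (if G.Adj u a then (1 : ZMod 2) else 0) =
        (if G.Adj u p then 1 else 0) + (if G.Adj u q then 1 else 0))
    (hX3 : cutRankOn G X (insert a Y) = 3)
    (h5X : 5 ≤ X.card) (h5Y : 5 ≤ Y.card) :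
    cutRankOn G (X.erase p) (insert a Y) = 3 := by
  classical
  set Z : Finset V := X.erase p with hZ
  have hnX : ∀ x, x ∉ X ↔ (x = a ∨ x ∈ Y) := by
    intro x
    rw [show (x = a ∨ x ∈ Y) ↔ x ∈ insert a Y by simp, ← hcompl]
    simp
  have haX : a ∉ X := (hnX a).2 (Or.inl rfl)
  have hqX : q ∉ X := (hnX q).2 (Or.inr hq)
  -- the three vertices are outside the rows Z
  have hrow : ∀ i : ↥Z, i.1 ≠ a ∧ i.1 ≠ p ∧ i.1 ≠ q := by
    rintro ⟨i, hi⟩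
    rw [hZ, Finset.mem_erase] at hi
    exact ⟨fun h => haX (h ▸ hi.2), hi.1, fun h => hqX (h ▸ hi.2)⟩
  have hvec : colfun G Z a = colfun G Z p + colfun G Z q := by
    funext i
    obtain ⟨h1, h2, h3⟩ := hrow i
    exact hpar i.1 h1 h2 h3
  -- upper bound
  have hub : cutRankOn G Z (insert a Y) ≤ 3 := by
    rw [← hX3]
    exact cutRankOn_mono_left G (Finset.erase_subset _ _)
  -- p's column is redundant over rows Z
  have hpmem : colfun G Z p ∈ span (ZMod 2) (colfun G Z '' ((insert a Y : Finset V) : Set V)) := by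
    have hpa : colfun G Z p = colfun G Z a + colfun G Z q := by
      funext i
      have := congrFun hvec i
      rw [Pi.add_apply] at this
      exact zmod2_rearrange' _ _ _ this
    rw [hpa]
    exact add_mem
      (subset_span (Set.mem_image_of_mem _ (by simp)))
      (subset_span (Set.mem_image_of_mem _ (by simp [hq])))
  -- complement of Z
  have hcomplZ : Finset.univ \ Z = insert p (insert a Y) := by
    ext x
    simp only [hZ, Finset.mem_sdiff, Finset.mem_univ, Finset.mem_erase, Finset.mem_insert,
      true_and, not_and]
    constructor
    · intro h
      by_cases hxp : x = p
      · exact Or.inl hxp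
      · rcases (hnX x).1 (h hxp) with h' | h'
        · exact Or.inr (Or.inl h')
        · exact Or.inr (Or.inr h')
    · rintro (rfl | h') hxp
      · exact absurd rfl hxp
      · exact fun hxX => ((hnX x).2 h') hxX
  -- lower bound via rank-connectivity
  have hlb : 3 ≤ cutRankOn G Z (insert a Y) := by
    have hcard1 : 4 ≤ Z.card := by
      rw [hZ, Finset.card_erase_of_mem hp]
      omega
    have hcard2 : 4 ≤ (Finset.univ \ Z).card := by
      rw [hcomplZ]
      have : Y ⊆ insert p (insert a Y) :=
        (Finset.subset_insert _ _).trans (Finset.subset_insert _ _) |>.trans (le_refl _)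
      calc 4 ≤ Y.card := by omega
        _ ≤ _ := Finset.card_le_card
          ((Finset.subset_insert a Y).trans (Finset.subset_insert p _))
    have h3le : 3 ≤ cutRank G Finset.univ Z := rankConn_lower h31 hcard1 hcard2
    rw [cutRank, hcomplZ] at h3le
    rwa [cutRankOn_insert_right_eq G hpmem] at h3le
  omega

set_option linter.unusedVariables false in
theorem triplet_sep {G : SimpleGraph V} (hp : IsPrime G Finset.univ)
    (h31 : RankConn G Finset.univ 3 1)
    {a b c : V} (hab : a ≠ b) (hac : a ≠ c) (hbc : b ≠ c)
    (ht : Triplet G a b c)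
    {X Y : Finset V} (hXY : X ∪ Y = Finset.univ \ {a}) (hd : Disjoint X Y)
    (hrX : cutRank G (Finset.univ \ {a}) X = 2) (h5X : 5 ≤ X.card) (h5Y : 5 ≤ Y.card) :
    (X ∩ {b, c}).card = 1 ∧
      cutRankOn G (X \ {b, c}) (Y ∪ {a}) = 3 ∧
      cutRankOn G (X ∪ {a}) (Y \ {b, c}) = 3 := by
  classical
  have hmem : ∀ x, (x ∈ X ∨ x ∈ Y) ↔ x ≠ a := by
    intro x
    rw [← Finset.mem_union, hXY]
    simp
  have hdXY : ∀ x, x ∈ X → x ∈ Y → False := fun x hx hy =>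
    Finset.disjoint_left.1 hd hx hy
  have haX : a ∉ X := fun h => (hmem a).1 (Or.inl h) rfl
  have haY : a ∉ Y := fun h => (hmem a).1 (Or.inr h) rfl
  have hYX : (Finset.univ \ {a}) \ X = Y := by
    ext x
    simp only [Finset.mem_sdiff, Finset.mem_univ, Finset.mem_singleton, true_and]
    constructor
    · rintro ⟨hxa, hxX⟩
      rcases (hmem x).2 hxa with h | h
      · exact absurd h hxX
      · exact h
    · intro h
      exact ⟨(hmem x).1 (Or.inr h), fun h' => hdXY x h' h⟩
  have hrXY : cutRankOn G X Y = 2 := by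
    rw [cutRank, hYX] at hrX
    exact hrX
  have hcomplX : Finset.univ \ X = insert a Y := by
    ext x
    simp only [Finset.mem_sdiff, Finset.mem_univ, Finset.mem_insert, true_and]
    constructor
    · intro h
      by_cases hxa : x = a
      · exact Or.inl hxa
      · rcases (hmem x).2 hxa with h' | h'
        · exact absurd h' h
        · exact Or.inr h'
    · rintro (rfl | h)
      · exact haX
      · exact fun h' => hdXY x h' h
  have hcomplY : Finset.univ \ Y = insert a X := by
    ext x
    simp only [Finset.mem_sdiff, Finset.mem_univ, Finset.mem_insert, true_and]
    constructor
    · intro h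
      by_cases hxa : x = a
      · exact Or.inl hxa
      · rcases (hmem x).2 hxa with h' | h'
        · exact Or.inr h'
        · exact absurd h' h
    · rintro (rfl | h)
      · exact haY
      · exact fun h' => hdXY x h h'
  have hpar := triplet_parity hab hac hbc ht
  -- rank of X vs Y ∪ {a} is 3
  have hXa3 : cutRankOn G X (insert a Y) = 3 := by
    have hub : cutRankOn G X (insert a Y) ≤ 3 := by
      have := cutRankOn_insert_right_le G X Y a
      omega
    have hlb : 3 ≤ cutRankOn G X (insert a Y) := by
      have h1 : 4 ≤ X.card := by omega
      have h2 : 4 ≤ (Finset.univ \ X).card := by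
        rw [hcomplX]
        have := Finset.card_le_card (Finset.subset_insert a Y)
        omega
      have := rankConn_lower h31 h1 h2
      rwa [cutRank, hcomplX] at this
    omega
  -- rank of Y vs X ∪ {a} is 3
  have hYa3 : cutRankOn G Y (insert a X) = 3 := by
    have hub : cutRankOn G Y (insert a X) ≤ 3 := by
      have h1 := cutRankOn_insert_right_le G Y X a
      have h2 : cutRankOn G Y X = 2 := by rw [cutRankOn_comm]; exact hrXY
      omega
    have hlb : 3 ≤ cutRankOn G Y (insert a X) := by
      have h1 : 4 ≤ Y.card := by omega
      have h2 : 4 ≤ (Finset.univ \ Y).card := by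
        rw [hcomplY]
        have := Finset.card_le_card (Finset.subset_insert a X)
        omega
      have := rankConn_lower h31 h1 h2
      rwa [cutRank, hcomplY] at this
    omega
  have hbmem : b ∈ X ∨ b ∈ Y := (hmem b).2 (Ne.symm hab)
  have hcmem : c ∈ X ∨ c ∈ Y := (hmem c).2 (Ne.symm hac)
  -- not both b, c in X
  have hnbX : ¬ (b ∈ X ∧ c ∈ X) := by
    rintro ⟨hbX, hcX⟩
    have hvec : colfun G Y a = colfun G Y b + colfun G Y c := by
      funext i
      have hia : i.1 ≠ a := fun h => haY (h ▸ i.2)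
      have hib : i.1 ≠ b := fun h => hdXY i.1 (h ▸ hbX) i.2
      have hic : i.1 ≠ c := fun h => hdXY i.1 (h ▸ hcX) i.2
      exact hpar i.1 hia hib hic
    have hamem : colfun G Y a ∈ span (ZMod 2) (colfun G Y '' (X : Set V)) := by
      rw [hvec]
      exact add_mem (subset_span (Set.mem_image_of_mem _ hbX))
        (subset_span (Set.mem_image_of_mem _ hcX))
    have := cutRankOn_insert_right_eq G hamem
    rw [hYa3] at this
    rw [cutRankOn_comm, hrXY] at this
    omega
  -- not both b, c in Y
  have hnbY : ¬ (b ∈ Y ∧ c ∈ Y) := by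
    rintro ⟨hbY, hcY⟩
    have hvec : colfun G X a = colfun G X b + colfun G X c := by
      funext i
      have hia : i.1 ≠ a := fun h => haX (h ▸ i.2)
      have hib : i.1 ≠ b := fun h => hdXY i.1 i.2 (h ▸ hbY)
      have hic : i.1 ≠ c := fun h => hdXY i.1 i.2 (h ▸ hcY)
      exact hpar i.1 hia hib hic
    have hamem : colfun G X a ∈ span (ZMod 2) (colfun G X '' (Y : Set V)) := by
      rw [hvec]
      exact add_mem (subset_span (Set.mem_image_of_mem _ hbY))
        (subset_span (Set.mem_image_of_mem _ hcY))
    have := cutRankOn_insert_right_eq G hamem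
    rw [hXa3, hrXY] at this
    omega
  have hsplit : (b ∈ X ∧ c ∈ Y) ∨ (c ∈ X ∧ b ∈ Y) := by tauto
  have hYa : Y ∪ {a} = insert a Y := by
    rw [Finset.union_comm, ← Finset.insert_eq]
  have hXa : X ∪ {a} = insert a X := by
    rw [Finset.union_comm, ← Finset.insert_eq]
  rcases hsplit with ⟨hbX, hcY⟩ | ⟨hcX, hbY⟩
  · have hcX : c ∉ X := fun h => hdXY c h hcY
    have h1 : X ∩ {b, c} = {b} := by
      ext x
      simp only [Finset.mem_inter, Finset.mem_insert, Finset.mem_singleton]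
      constructor
      · rintro ⟨hX, rfl | rfl⟩
        · rfl
        · exact absurd hX hcX
      · rintro rfl
        exact ⟨hbX, Or.inl rfl⟩
    have h2 : X \ {b, c} = X.erase b := by
      ext x
      simp only [Finset.mem_sdiff, Finset.mem_insert, Finset.mem_singleton, Finset.mem_erase]
      constructor
      · rintro ⟨hx, h⟩
        exact ⟨fun h' => h (Or.inl h'), hx⟩
      · rintro ⟨hxb, hx⟩
        refine ⟨hx, ?_⟩
        rintro (rfl | rfl)
        · exact hxb rfl
        · exact hcX hx
    have h3 : Y \ {b, c} = Y.erase c := by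
      ext x
      simp only [Finset.mem_sdiff, Finset.mem_insert, Finset.mem_singleton, Finset.mem_erase]
      constructor
      · rintro ⟨hx, h⟩
        exact ⟨fun h' => h (Or.inr h'), hx⟩
      · rintro ⟨hxc, hx⟩
        refine ⟨hx, ?_⟩
        rintro (rfl | rfl)
        · exact hdXY _ hbX hx
        · exact hxc rfl
    refine ⟨by rw [h1, Finset.card_singleton], ?_, ?_⟩
    · rw [h2, hYa]
      exact erase_rank h31 hcomplX hbX hcY hpar hXa3 h5X h5Y
    · rw [h3, hXa, cutRankOn_comm]
      have hpar' : ∀ u, u ≠ a → u ≠ c → u ≠ b →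
          (if G.Adj u a then (1 : ZMod 2) else 0) =
            (if G.Adj u c then 1 else 0) + (if G.Adj u b then 1 else 0) := by
        intro u h1' h2' h3'
        rw [add_comm]
        exact hpar u h1' h3' h2'
      exact erase_rank h31 hcomplY hcY hbX hpar' hYa3 h5Y h5X
  · have hbX : b ∉ X := fun h => hdXY b h hbY
    have h1 : X ∩ {b, c} = {c} := by
      ext x
      simp only [Finset.mem_inter, Finset.mem_insert, Finset.mem_singleton]
      constructor
      · rintro ⟨hX, rfl | rfl⟩
        · exact absurd hX hbX
        · rfl
      · rintro rfl
        exact ⟨hcX, Or.inr rfl⟩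
    have h2 : X \ {b, c} = X.erase c := by
      ext x
      simp only [Finset.mem_sdiff, Finset.mem_insert, Finset.mem_singleton, Finset.mem_erase]
      constructor
      · rintro ⟨hx, h⟩
        exact ⟨fun h' => h (Or.inr h'), hx⟩
      · rintro ⟨hxc, hx⟩
        refine ⟨hx, ?_⟩
        rintro (rfl | rfl)
        · exact hbX hx
        · exact hxc rfl
    have h3 : Y \ {b, c} = Y.erase b := by
      ext x
      simp only [Finset.mem_sdiff, Finset.mem_insert, Finset.mem_singleton, Finset.mem_erase]
      constructor
      · rintro ⟨hx, h⟩
        exact ⟨fun h' => h (Or.inl h'), hx⟩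
      · rintro ⟨hxb, hx⟩
        refine ⟨hx, ?_⟩
        rintro (rfl | rfl)
        · exact hxb rfl
        · exact hdXY _ hcX hx
    have hpar' : ∀ u, u ≠ a → u ≠ c → u ≠ b →
        (if G.Adj u a then (1 : ZMod 2) else 0) =
          (if G.Adj u c then 1 else 0) + (if G.Adj u b then 1 else 0) := by
      intro u h1' h2' h3'
      rw [add_comm]
      exact hpar u h1' h3' h2'
    refine ⟨by rw [h1, Finset.card_singleton], ?_, ?_⟩
    · rw [h2, hYa]
      exact erase_rank h31 hcomplX hcX hbY hpar' hXa3 h5X h5Y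
    · rw [h3, hXa, cutRankOn_comm]
      exact erase_rank h31 hcomplY hbY hcX hpar hYa3 h5Y h5X
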